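/- Let 𝔛 be a finite set, P a probability measure on 𝔛, and m : 2^𝔛 → [0,1] a set function with P(A) ≤ m(A) for every A ⊆ 𝔛. Let Y_1, Y_2, … be i.i.d. with law P and let P_n be the empirical measure. Let (h_n) be a sequence of positive reals with h_n → 0 and h_n √(n / ln ln n) → ∞ as n → ∞. Then almost surely, for all sufficiently large n, {A ⊆ 𝔛 : P_n(A) ≥ m(A) − h_n} = {A ⊆ 𝔛 : P(A) = m(A)}. -/

import Mathlib

open MeasureTheory Set Filter ProbabilityTheory
open scoped ENNReal NNReal

section Aux
variable {Ω : Type*} [MeasurableSpace Ω] {μ : Measure Ω}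

lemma integrable_of_abs_le [IsFiniteMeasure μ] {f : Ω → ℝ} (hf : AEStronglyMeasurable f μ)
    (C : ℝ) (h : ∀ ω, |f ω| ≤ C) : Integrable f μ :=
  (integrable_const C).mono' hf (ae_of_all _ fun ω => by rw [Real.norm_eq_abs]; exact h ω)

lemma exp_le_convex {z : ℝ} (t : ℝ) (hz : |z| ≤ 1) :
    Real.exp (t * z) ≤ ((1 + z) / 2) * Real.exp t + ((1 - z) / 2) * Real.exp (-t) := by
  obtain ⟨hz1, hz2⟩ := abs_le.1 hz
  have key := convexOn_exp.2 (Set.mem_univ (-t)) (Set.mem_univ t)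
    (by linarith : (0:ℝ) ≤ (1 - z)/2) (by linarith : (0:ℝ) ≤ (1 + z)/2) (by ring)
  simp only [smul_eq_mul] at key
  calc Real.exp (t * z) = Real.exp ((1 - z)/2 * (-t) + (1 + z)/2 * t) := by ring_nf
    _ ≤ (1 - z)/2 * Real.exp (-t) + (1 + z)/2 * Real.exp t := key
    _ = _ := by ring

lemma mgf_le_of_mean_zero [IsProbabilityMeasure μ] {Z : Ω → ℝ} (hZm : Measurable Z)
    (hZb : ∀ ω, |Z ω| ≤ 1) (hZ0 : ∫ ω, Z ω ∂μ = 0) (t : ℝ) :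
    mgf Z μ t ≤ Real.exp (t ^ 2 / 2) := by
  have hZint : Integrable Z μ := integrable_of_abs_le hZm.aestronglyMeasurable 1 hZb
  have hint1 : Integrable (fun ω => Real.exp (t * Z ω)) μ := by
    refine integrable_of_abs_le ((hZm.const_mul t).exp).aestronglyMeasurable
      (Real.exp |t|) fun ω => ?_
    rw [abs_of_pos (Real.exp_pos _), Real.exp_le_exp]
    calc t * Z ω ≤ |t * Z ω| := le_abs_self _
      _ = |t| * |Z ω| := abs_mul _ _
      _ ≤ |t| * 1 := by gcongr ?_ * ?_; exact hZb ω
      _ = |t| := mul_one _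
  have hint2 : Integrable
      (fun ω => ((1 + Z ω)/2) * Real.exp t + ((1 - Z ω)/2) * Real.exp (-t)) μ := by
    apply Integrable.add <;> apply Integrable.mul_const
    · exact (integrable_const 1).add hZint |>.div_const 2
    · exact ((integrable_const 1).sub hZint).div_const 2
  calc mgf Z μ t = ∫ ω, Real.exp (t * Z ω) ∂μ := rfl
    _ ≤ ∫ ω, (((1 + Z ω)/2) * Real.exp t + ((1 - Z ω)/2) * Real.exp (-t)) ∂μ :=
        integral_mono hint1 hint2 fun ω => exp_le_convex t (hZb ω)
    _ = (Real.exp t + Real.exp (-t)) / 2 := by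
        have e : ∀ ω, ((1 + Z ω)/2) * Real.exp t + ((1 - Z ω)/2) * Real.exp (-t)
            = (Real.exp t + Real.exp (-t))/2 + Z ω * ((Real.exp t - Real.exp (-t))/2) := by
          intro ω; ring
        simp_rw [e]
        rw [integral_add (integrable_const _) (hZint.mul_const _), integral_const,
          probReal_univ, smul_eq_mul, one_mul, integral_mul_const, hZ0,
          zero_mul, add_zero]
    _ = Real.cosh t := (Real.cosh_eq t).symm
    _ ≤ Real.exp (t^2/2) := Real.cosh_le_exp_half_sq t

lemma lil_upper {Ω : Type*} [MeasurableSpace Ω] (μ : Measure Ω) [IsProbabilityMeasure μ]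
    (W : ℕ → Ω → ℝ) (hW : ∀ i, Measurable (W i))
    (hWb : ∀ i ω, W i ω ∈ Set.Icc (0:ℝ) 1)
    (hWindep : iIndepFun W μ)
    (p : ℝ) (hmean : ∀ i, ∫ ω, W i ω ∂μ = p) :
    ∀ᵐ ω ∂μ, ∀ᶠ n : ℕ in atTop,
      (n : ℝ) * p - (∑ i ∈ Finset.range n, W i ω) ≤ 4 * Real.sqrt (n * Real.log (Real.log n)) := by
  classical
  -- basic facts about the centered variables
  have hWsm : ∀ i, StronglyMeasurable (W i) := fun i => (hW i).stronglyMeasurable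
  have hZm : ∀ i, Measurable (fun ω => p - W i ω) := fun i => measurable_const.sub (hW i)
  have hWint : ∀ i, Integrable (W i) μ := fun i =>
    integrable_of_abs_le (hW i).aestronglyMeasurable 1 fun ω =>
      abs_le.2 ⟨by have := (hWb i ω).1; linarith, (hWb i ω).2⟩
  have hp0 : 0 ≤ p := (hmean 0) ▸ integral_nonneg (fun ω => (hWb 0 ω).1)
  have hp1 : p ≤ 1 := by
    rw [← hmean 0]
    calc ∫ ω, W 0 ω ∂μ ≤ ∫ _ω, (1:ℝ) ∂μ :=
          integral_mono (hWint 0) (integrable_const 1) fun ω => (hWb 0 ω).2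
      _ = 1 := by simp
  have hZb : ∀ i ω, |p - W i ω| ≤ 1 := fun i ω => by
    have h0 := (hWb i ω).1; have h1 := (hWb i ω).2
    exact abs_le.2 ⟨by linarith, by linarith⟩
  have hZint : ∀ i, Integrable (fun ω => p - W i ω) μ := fun i =>
    integrable_of_abs_le (hZm i).aestronglyMeasurable 1 (hZb i)
  have hZ0 : ∀ i, ∫ ω, (p - W i ω) ∂μ = 0 := fun i => by
    rw [integral_sub (integrable_const p) (hWint i), integral_const, probReal_univ,
      smul_eq_mul, one_mul, hmean i, sub_self]
  have hZindep : iIndepFun (fun i ω => p - W i ω) μ :=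
    hWindep.comp (fun _ x => p - x) (fun _ => measurable_const.sub measurable_id)
  have hmgf : ∀ i t, mgf (fun ω => p - W i ω) μ t ≤ Real.exp (t ^ 2 / 2) := fun i t =>
    mgf_le_of_mean_zero (hZm i) (hZb i) (hZ0 i) t
  -- the partial sums of the centered variables
  set T : ℕ → Ω → ℝ := fun n ω => ∑ i ∈ Finset.range n, (p - W i ω) with hTdef
  have hTm : ∀ n, Measurable (T n) := fun n => Finset.measurable_sum _ (fun i _ => hZm i)
  have hTb : ∀ n ω, |T n ω| ≤ n := fun n ω => by
    calc |T n ω| ≤ ∑ i ∈ Finset.range n, |p - W i ω| := Finset.abs_sum_le_sum_abs _ _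
      _ ≤ ∑ _i ∈ Finset.range n, (1:ℝ) := Finset.sum_le_sum fun i _ => hZb i ω
      _ = n := by simp
  -- the natural filtration
  set ℱ := Filtration.natural W hWsm with hFdef
  have hadapW : ∀ i n, i ≤ n → Measurable[ℱ n] (W i) := fun i n hin =>
    ((Filtration.stronglyAdapted_natural hWsm i).measurable).mono (ℱ.mono hin) le_rfl
  have hTadap : ∀ n, Measurable[ℱ n] (T (n+1)) := fun n => by
    refine Finset.measurable_sum _ (fun i hi => ?_)
    exact measurable_const.sub (hadapW i n (Nat.lt_succ_iff.1 (Finset.mem_range.1 hi)))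
  have hgint : ∀ (l : ℝ) (n : ℕ), Integrable (fun ω => Real.exp (l * T n ω)) μ := by
    intro l n
    refine integrable_of_abs_le (((hTm n).const_mul l).exp).aestronglyMeasurable
      (Real.exp (|l| * n)) fun ω => ?_
    rw [abs_of_pos (Real.exp_pos _), Real.exp_le_exp]
    calc l * T n ω ≤ |l * T n ω| := le_abs_self _
      _ = |l| * |T n ω| := abs_mul _ _
      _ ≤ |l| * n := by gcongr ?_ * ?_; exact hTb n ω
  -- submartingale property
  have hsub : ∀ l : ℝ, Submartingale (fun j ω => Real.exp (l * T (j+1) ω)) ℱ μ := by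
    intro l
    refine submartingale_nat (fun n => (((hTadap n).const_mul l).exp).stronglyMeasurable)
      (fun n => hgint l (n+1)) (fun n => ?_)
    have hgsplit : (fun ω => Real.exp (l * T (n+1+1) ω)) =
        (fun ω => Real.exp (l * T (n+1) ω)) * (fun ω => Real.exp (l * (p - W (n+1) ω))) := by
      funext ω
      simp only [Pi.mul_apply, ← Real.exp_add]
      congr 1
      rw [hTdef]
      simp only [Finset.sum_range_succ]
      ring
    have hfacm : StronglyMeasurable[MeasurableSpace.comap (W (n+1)) inferInstance]
        (fun ω => Real.exp (l * (p - W (n+1) ω))) :=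
      (((measurable_const.sub (comap_measurable (W (n+1)))).const_mul l).exp).stronglyMeasurable
    have hindep2 : Indep (MeasurableSpace.comap (W (n+1)) inferInstance) (ℱ n) μ :=
      ProbabilityTheory.iIndepFun.indep_comap_natural_of_lt hWsm hWindep (Nat.lt_succ_self n)
    have hcond : μ[(fun ω => Real.exp (l * (p - W (n+1) ω)))|ℱ n] =ᵐ[μ]
        fun _ => μ[fun ω => Real.exp (l * (p - W (n+1) ω))] :=
      condExp_indep_eq ((hW (n+1)).comap_le) (ℱ.le n) hfacm hindep2
    have hfacint : Integrable (fun ω => Real.exp (l * (p - W (n+1) ω))) μ := by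
      refine integrable_of_abs_le (((hZm (n+1)).const_mul l).exp).aestronglyMeasurable
        (Real.exp |l|) fun ω => ?_
      rw [abs_of_pos (Real.exp_pos _), Real.exp_le_exp]
      calc l * (p - W (n+1) ω) ≤ |l * (p - W (n+1) ω)| := le_abs_self _
        _ = |l| * |p - W (n+1) ω| := abs_mul _ _
        _ ≤ |l| * 1 := by gcongr ?_ * ?_; exact hZb (n+1) ω
        _ = |l| := mul_one _
    have hmul : μ[fun ω => Real.exp (l * T (n+1+1) ω)|ℱ n] =ᵐ[μ]
        (fun ω => Real.exp (l * T (n+1) ω)) * μ[(fun ω => Real.exp (l * (p - W (n+1) ω)))|ℱ n] := by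
      rw [hgsplit]
      exact condExp_mul_of_stronglyMeasurable_left (((hTadap n).const_mul l).exp).stronglyMeasurable
        (hgsplit ▸ hgint l (n+2)) hfacint
    have hone : 1 ≤ μ[fun ω => Real.exp (l * (p - W (n+1) ω))] := by
      have heq : ∫ ω, (1 + l * (p - W (n+1) ω)) ∂μ = 1 := by
        rw [integral_add (integrable_const 1) ((hZint (n+1)).const_mul l), integral_const,
          probReal_univ, smul_eq_mul, one_mul, integral_const_mul, hZ0,
          mul_zero, add_zero]
      calc (1:ℝ) = ∫ ω, (1 + l * (p - W (n+1) ω)) ∂μ := heq.symm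
        _ ≤ ∫ ω, Real.exp (l * (p - W (n+1) ω)) ∂μ := by
            refine integral_mono ((integrable_const 1).add ((hZint (n+1)).const_mul l))
              hfacint fun ω => ?_
            have := Real.add_one_le_exp (l * (p - W (n+1) ω))
            linarith
    filter_upwards [hmul, hcond] with ω h1 h2
    rw [h1, Pi.mul_apply, h2]
    exact le_mul_of_one_le_right (Real.exp_pos _).le hone
  -- expectation bound via the mgf
  have hEg : ∀ (l : ℝ) (N : ℕ), ∫ ω, Real.exp (l * T N ω) ∂μ ≤ Real.exp (N * (l^2/2)) := by
    intro l N
    have h1 : ∫ ω, Real.exp (l * T N ω) ∂μ = mgf (∑ i ∈ Finset.range N, fun ω => p - W i ω) μ l := by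
      simp only [mgf, Finset.sum_apply, hTdef]
    rw [h1, iIndepFun.mgf_sum hZindep hZm]
    calc ∏ i ∈ Finset.range N, mgf (fun ω => p - W i ω) μ l
        ≤ ∏ _i ∈ Finset.range N, Real.exp (l^2/2) :=
          Finset.prod_le_prod (fun i _ => mgf_nonneg) (fun i _ => hmgf i l)
      _ = Real.exp (N * (l^2/2)) := by
          rw [Finset.prod_const, Finset.card_range, ← Real.exp_nat_mul]
  -- Doob maximal inequality with Chernoff bound
  have hDoob : ∀ (l t : ℝ), 0 < l → ∀ N : ℕ,
      μ {ω | Real.exp (l * t) ≤ (Finset.range (N+1)).sup' Finset.nonempty_range_add_one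
          (fun j => Real.exp (l * T (j+1) ω))} ≤
        ENNReal.ofReal (Real.exp (((N:ℝ)+1) * (l^2/2) - l * t)) := by
    intro l t hl N
    set ε : NNReal := (Real.exp (l * t)).toNNReal with hε
    have hεcoe : (ε : ℝ) = Real.exp (l * t) := Real.coe_toNNReal _ (Real.exp_pos _).le
    have hεofReal : (ε : ℝ≥0∞) = ENNReal.ofReal (Real.exp (l*t)) := rfl
    have hmax := maximal_ineq (μ := μ) (hsub l) (fun j ω => (Real.exp_pos _).le) (ε := ε) N
    have h2 : ∫ ω in {ω | (ε:ℝ) ≤ (Finset.range (N+1)).sup' Finset.nonempty_range_add_one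
        (fun j => Real.exp (l * T (j+1) ω))}, Real.exp (l * T (N+1) ω) ∂μ ≤
        Real.exp (((N:ℝ)+1) * (l^2/2)) := by
      refine le_trans (setIntegral_le_integral (hgint l (N+1))
        (ae_of_all _ fun ω => (Real.exp_pos _).le)) ?_
      have := hEg l (N+1)
      push_cast at this
      linarith
    have hε0 : (ε : ℝ≥0∞) ≠ 0 := by
      simp only [ne_eq, ENNReal.coe_eq_zero]
      exact ne_of_gt (Real.toNNReal_pos.2 (Real.exp_pos _))
    have hεtop : (ε : ℝ≥0∞) ≠ ⊤ := ENNReal.coe_ne_top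
    simp only [← hεcoe]
    calc μ {ω | (ε:ℝ) ≤ (Finset.range (N+1)).sup' Finset.nonempty_range_add_one
          (fun j => Real.exp (l * T (j+1) ω))}
        = (↑ε)⁻¹ * ((↑ε) * μ _) := by rw [← mul_assoc, ENNReal.inv_mul_cancel hε0 hεtop, one_mul]
      _ ≤ (↑ε)⁻¹ * ENNReal.ofReal (Real.exp (((N:ℝ)+1) * (l^2/2))) := by
          gcongr
          refine le_trans ?_ (ENNReal.ofReal_le_ofReal h2)
          rw [← smul_eq_mul]
          exact hmax
      _ = ENNReal.ofReal ((Real.exp (l*t))⁻¹) * ENNReal.ofReal (Real.exp (((N:ℝ)+1) * (l^2/2))) := by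
          rw [hεofReal, ← ENNReal.ofReal_inv_of_pos (Real.exp_pos _)]
      _ = ENNReal.ofReal ((Real.exp (l*t))⁻¹ * Real.exp (((N:ℝ)+1) * (l^2/2))) :=
          (ENNReal.ofReal_mul (by positivity)).symm
      _ = ENNReal.ofReal (Real.exp (((N:ℝ)+1) * (l^2/2) - l * t)) := by
          rw [← Real.exp_neg, ← Real.exp_add, neg_add_eq_sub]
  -- the block events
  set L : ℕ → ℝ := fun k => Real.log (Real.log ((2:ℝ)^k)) with hLdef
  set tt : ℕ → ℝ := fun k => 2 * Real.sqrt (((2:ℝ)^(k+1) + 1) * L k) with httdef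
  set lam : ℕ → ℝ := fun k => tt k / ((2:ℝ)^(k+1) + 1) with hlamdef
  set Ev : ℕ → Set Ω := fun k => {ω | Real.exp (lam k * tt k) ≤
      (Finset.range (2^(k+1)+1)).sup' Finset.nonempty_range_add_one
      (fun j => Real.exp (lam k * T (j+1) ω))} with hEvdef
  have hlog2k : ∀ k : ℕ, 2 ≤ k → 1 < Real.log ((2:ℝ)^k) := by
    intro k hk
    rw [Real.log_pow]
    have h2 : (0.6931471803 : ℝ) < Real.log 2 := Real.log_two_gt_d9
    have hk' : (2:ℝ) ≤ (k:ℝ) := by exact_mod_cast hk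
    nlinarith
  have hLpos : ∀ k : ℕ, 2 ≤ k → 0 < L k := fun k hk => Real.log_pos (hlog2k k hk)
  have hNrpos : ∀ k : ℕ, (0:ℝ) < (2:ℝ)^(k+1) + 1 := fun k => by positivity
  have httpos : ∀ k : ℕ, 2 ≤ k → 0 < tt k := fun k hk =>
    mul_pos two_pos (Real.sqrt_pos.2 (mul_pos (hNrpos k) (hLpos k hk)))
  have hlampos : ∀ k : ℕ, 2 ≤ k → 0 < lam k := fun k hk =>
    div_pos (httpos k hk) (hNrpos k)
  have httsq : ∀ k : ℕ, 2 ≤ k → tt k ^ 2 = 4 * (((2:ℝ)^(k+1) + 1) * L k) := by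
    intro k hk
    simp only [httdef]
    rw [mul_pow, Real.sq_sqrt (mul_nonneg (hNrpos k).le (hLpos k hk).le)]
    ring
  have hEvbound : ∀ k : ℕ, 2 ≤ k →
      μ (Ev k) ≤ ENNReal.ofReal ((((k:ℝ) * Real.log 2)^2)⁻¹) := by
    intro k hk
    have h := hDoob (lam k) (tt k) (hlampos k hk) (2^(k+1))
    refine le_trans h (le_of_eq ?_)
    congr 1
    have hNr : ((2^(k+1):ℕ):ℝ) = (2:ℝ)^(k+1) := by push_cast; ring
    have hNr0 : ((2:ℝ)^(k+1) + 1) ≠ 0 := ne_of_gt (hNrpos k)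
    have hsq := httsq k hk
    have hlameq : lam k = tt k / ((2:ℝ)^(k+1) + 1) := rfl
    have e1 : lam k * tt k = 4 * L k := by
      rw [hlameq]
      field_simp
      linear_combination hsq
    have e2 : ((2:ℝ)^(k+1) + 1) * (lam k^2/2) = 2 * L k := by
      rw [hlameq, div_pow, hsq]
      field_simp
      ring
    rw [hNr]
    rw [show ((2:ℝ)^(k+1) + 1) * (lam k^2/2) - lam k * tt k = -(2 * L k) by linarith]
    have hLk : L k = Real.log ((k:ℝ) * Real.log 2) := by
      simp only [hLdef]
      rw [Real.log_pow]
    have hklog2 : (0:ℝ) < (k:ℝ) * Real.log 2 := by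
      have hk' : (2:ℝ) ≤ (k:ℝ) := by exact_mod_cast hk
      have := Real.log_pos (by norm_num : (1:ℝ) < 2)
      nlinarith
    rw [hLk,
      show -(2 * Real.log ((k:ℝ) * Real.log 2)) = Real.log ((((k:ℝ) * Real.log 2)^2)⁻¹) by
        rw [Real.log_inv, Real.log_pow]; push_cast; ring,
      Real.exp_log (inv_pos.2 (pow_pos hklog2 2))]
  -- summability and Borel–Cantelli
  have hsummable : Summable (fun k : ℕ => ((((k:ℝ)+2) * Real.log 2)^2)⁻¹) := by
    have hbase : Summable (fun n : ℕ => ((n:ℝ)^2)⁻¹) := by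
      have := Real.summable_one_div_nat_pow.2 (by norm_num : 1 < 2)
      simpa [one_div] using this
    have hshift : Summable (fun k : ℕ => (((k:ℝ)+2)^2)⁻¹) := by
      have := (_root_.summable_nat_add_iff (f := fun n : ℕ => ((n:ℝ)^2)⁻¹) 2).2 hbase
      refine this.congr fun k => ?_
      push_cast
      ring
    have := hshift.mul_left ((Real.log 2 ^ 2)⁻¹)
    refine this.congr fun k => ?_
    rw [mul_pow, mul_inv]
    ring
  have hsum : (∑' k : ℕ, μ (Ev (k+2))) ≠ ⊤ := by
    have hb : ∀ k : ℕ, μ (Ev (k+2)) ≤ ENNReal.ofReal (((((k:ℝ)+2) * Real.log 2)^2)⁻¹) := by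
      intro k
      have := hEvbound (k+2) (by omega)
      rwa [show (((k+2:ℕ):ℝ)) = (k:ℝ)+2 by push_cast; ring] at this
    have hle2 : (∑' k : ℕ, μ (Ev (k+2))) ≤
        ENNReal.ofReal (∑' k : ℕ, ((((k:ℝ)+2) * Real.log 2)^2)⁻¹) := by
      rw [ENNReal.ofReal_tsum_of_nonneg (fun k => by positivity) hsummable]
      exact ENNReal.tsum_le_tsum hb
    exact ne_top_of_le_ne_top ENNReal.ofReal_ne_top hle2
  have hBC := MeasureTheory.ae_eventually_notMem (μ := μ) (s := fun k => Ev (k+2)) hsum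
  filter_upwards [hBC] with ω hω
  rw [eventually_atTop] at hω
  obtain ⟨K, hK⟩ := hω
  rw [eventually_atTop]
  refine ⟨2^(K+2), fun n hn => ?_⟩
  have h1n : 1 ≤ n := le_trans Nat.one_le_two_pow hn
  have hn0 : n ≠ 0 := by omega
  have hk1 : 2^(Nat.log 2 n) ≤ n := Nat.pow_log_le_self 2 hn0
  have hk2 : n < 2^(Nat.log 2 n + 1) := Nat.lt_pow_succ_log_self one_lt_two n
  have hkK : K + 2 ≤ Nat.log 2 n := (Nat.le_log_iff_pow_le one_lt_two hn0).2 hn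
  set k := Nat.log 2 n with hkdef
  have hk2' : 2 ≤ k := by omega
  have hnot : ω ∉ Ev k := by
    have := hK (k - 2) (by omega)
    rwa [show k - 2 + 2 = k by omega] at this
  simp only [hEvdef, Set.mem_setOf_eq, not_le] at hnot
  have hjmem : n - 1 ∈ Finset.range (2^(k+1)+1) := Finset.mem_range.2 (by omega)
  have hle := Finset.le_sup' (fun j => Real.exp (lam k * T (j+1) ω)) hjmem
  have hTn : T n ω < tt k := by
    have hlt : Real.exp (lam k * T (n-1+1) ω) < Real.exp (lam k * tt k) :=
      lt_of_le_of_lt hle hnot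
    rw [show n - 1 + 1 = n by omega] at hlt
    exact (mul_lt_mul_iff_right₀ (hlampos k hk2')).1 (Real.exp_lt_exp.1 hlt)
  have hc1 : ((2:ℝ)^k) ≤ (n:ℝ) := by exact_mod_cast hk1
  have hLk := hLpos k hk2'
  have hlogpos := hlog2k k hk2'
  have hlogn : Real.log ((2:ℝ)^k) ≤ Real.log (n:ℝ) :=
    (Real.log_le_log_iff (by positivity) (by positivity : (0:ℝ) < (n:ℝ))).2 hc1
  have hLn : L k ≤ Real.log (Real.log (n:ℝ)) := by
    have hpos : (0:ℝ) < Real.log ((2:ℝ)^k) := by linarith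
    have : L k = Real.log (Real.log ((2:ℝ)^k)) := rfl
    rw [this]
    exact (Real.log_le_log_iff hpos (by linarith)).2 hlogn
  have hLnpos : (0:ℝ) < Real.log (Real.log (n:ℝ)) := lt_of_lt_of_le hLk hLn
  have h2k1 : (1:ℝ) ≤ (2:ℝ)^k := one_le_pow₀ (by norm_num)
  have harg : ((2:ℝ)^(k+1) + 1) * L k ≤ 4 * ((n:ℝ) * Real.log (Real.log (n:ℝ))) := by
    have hA : ((2:ℝ)^(k+1) + 1) ≤ 3 * (n:ℝ) := by
      have h2 : (2:ℝ)^(k+1) = 2 * (2:ℝ)^k := by ring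
      nlinarith
    nlinarith
  have htt4 : tt k ≤ 4 * Real.sqrt ((n:ℝ) * Real.log (Real.log (n:ℝ))) := by
    have httk : tt k = 2 * Real.sqrt (((2:ℝ)^(k+1) + 1) * L k) := rfl
    rw [httk]
    have hs := Real.sqrt_le_sqrt harg
    rw [show (4:ℝ) * ((n:ℝ) * Real.log (Real.log (n:ℝ)))
          = 2^2 * ((n:ℝ) * Real.log (Real.log (n:ℝ))) by ring,
      Real.sqrt_mul (by norm_num : (0:ℝ) ≤ (2:ℝ)^2),
      Real.sqrt_sq (by norm_num : (0:ℝ) ≤ 2)] at hs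
    linarith
  have hTeq : T n ω = (n:ℝ) * p - ∑ i ∈ Finset.range n, W i ω := by
    simp only [hTdef, Finset.sum_sub_distrib, Finset.sum_const, Finset.card_range, nsmul_eq_mul]
  linarith [hTn, htt4, hTeq.symm.le, hTeq.le]

end Aux


/-- discrete case step in the proof of Theorem 1: for 𝔛 finite, P a
probability measure on 𝔛, m : 2^𝔛 → [0,1] with P(A) ≤ m(A) for all A, Y_1, Y_2, …
i.i.d. with law P, P_n the empirical measure, and h_n > 0 with h_n → 0 and
h_n √(n / ln ln n) → ∞, almost surely for all sufficiently large n the estimated class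
{A : P_n(A) ≥ m(A) − h_n} coincides with the binding class {A : P(A) = m(A)}. -/
theorem stmt_12 {X : Type*} [Fintype X] [MeasurableSpace X] [MeasurableSingletonClass X]
    {Ω : Type*} [MeasurableSpace Ω] (μ : Measure Ω) [IsProbabilityMeasure μ]
    (P : Measure X) [IsProbabilityMeasure P]
    (m : Set X → ℝ) (hm : ∀ A : Set X, m A ∈ Set.Icc (0:ℝ) 1)
    (hnull : ∀ A : Set X, (P A).toReal ≤ m A)
    (Y : ℕ → Ω → X) (hYmeas : ∀ i, Measurable (Y i))
    (hYindep : ProbabilityTheory.iIndepFun Y μ)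
    (hYident : ∀ i, μ.map (Y i) = P)
    (h : ℕ → ℝ) (hpos : ∀ n, 0 < h n)
    (hto0 : Tendsto h atTop (nhds 0))
    (hrate : Tendsto (fun n : ℕ => h n * Real.sqrt ((n : ℝ) / Real.log (Real.log n)))
      atTop atTop) :
    ∀ᵐ ω ∂μ, ∀ᶠ n : ℕ in atTop,
      {A : Set X |
          (∑ i ∈ Finset.range n, A.indicator (fun _ => (1:ℝ)) (Y i ω)) / n ≥ m A - h n} =
      {A : Set X | (P A).toReal = m A} := by
  classical
  -- deterministic comparison of rates
  have hdet : ∀ᶠ n : ℕ in atTop,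
      4 * Real.sqrt ((n:ℝ) * Real.log (Real.log n)) ≤ (n:ℝ) * h n := by
    have h4 : ∀ᶠ n : ℕ in atTop, (4:ℝ) ≤ h n * Real.sqrt ((n:ℝ) / Real.log (Real.log n)) :=
      hrate.eventually_ge_atTop 4
    filter_upwards [h4, eventually_ge_atTop 3] with n h4n h3n
    have hn3 : (3:ℝ) ≤ (n:ℝ) := by exact_mod_cast h3n
    have hlogn : 1 < Real.log (n:ℝ) := by
      have he : Real.exp 1 < 3 := lt_trans Real.exp_one_lt_d9 (by norm_num)
      calc 1 = Real.log (Real.exp 1) := (Real.log_exp 1).symm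
        _ < Real.log (n:ℝ) :=
            (Real.log_lt_log_iff (Real.exp_pos 1) (by linarith)).2 (by linarith)
    have hll : 0 < Real.log (Real.log (n:ℝ)) := Real.log_pos hlogn
    have hsq : Real.sqrt ((n:ℝ)/Real.log (Real.log (n:ℝ))) *
        Real.sqrt ((n:ℝ)*Real.log (Real.log (n:ℝ))) = (n:ℝ) := by
      rw [← Real.sqrt_mul (by positivity),
        show (n:ℝ)/Real.log (Real.log (n:ℝ)) * ((n:ℝ)*Real.log (Real.log (n:ℝ))) = (n:ℝ)^2 by
          field_simp]
      exact Real.sqrt_sq (by positivity)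
    calc 4 * Real.sqrt ((n:ℝ)*Real.log (Real.log (n:ℝ)))
        ≤ (h n * Real.sqrt ((n:ℝ)/Real.log (Real.log (n:ℝ)))) *
            Real.sqrt ((n:ℝ)*Real.log (Real.log (n:ℝ))) :=
          mul_le_mul_of_nonneg_right h4n (Real.sqrt_nonneg _)
      _ = h n * (n:ℝ) := by rw [mul_assoc, hsq]
      _ = (n:ℝ) * h n := mul_comm _ _
  -- the key per-set statement
  have key : ∀ A : Set X, ∀ᵐ ω ∂μ, ∀ᶠ n : ℕ in atTop,
      ((∑ i ∈ Finset.range n, A.indicator (fun _ => (1:ℝ)) (Y i ω)) / n ≥ m A - h n ↔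
        (P A).toReal = m A) := by
    intro A
    have hA : MeasurableSet A := A.toFinite.measurableSet
    have hIm : Measurable (A.indicator (fun _ => (1:ℝ))) := measurable_const.indicator hA
    set W : ℕ → Ω → ℝ := fun i ω => A.indicator (fun _ => (1:ℝ)) (Y i ω) with hWdef
    have hW : ∀ i, Measurable (W i) := fun i => hIm.comp (hYmeas i)
    have hWb : ∀ i ω, W i ω ∈ Set.Icc (0:ℝ) 1 := fun i ω => by
      by_cases hmem : Y i ω ∈ A <;> simp [hWdef, hmem]
    have hWindep : ProbabilityTheory.iIndepFun W μ :=
      hYindep.comp (fun _ => A.indicator (fun _ => (1:ℝ))) (fun _ => hIm)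
    set p : ℝ := (P A).toReal with hpdef
    have hmean : ∀ i, ∫ ω, W i ω ∂μ = p := by
      intro i
      have : ∫ ω, W i ω ∂μ = ∫ x, A.indicator (fun _ => (1:ℝ)) x ∂(μ.map (Y i)) :=
        (integral_map (hYmeas i).aemeasurable hIm.aestronglyMeasurable).symm
      rw [this, hYident i, integral_indicator_const (1:ℝ) hA, smul_eq_mul, mul_one, measureReal_def]
    have hSLLN : ∀ᵐ ω ∂μ,
        Tendsto (fun n : ℕ => (∑ i ∈ Finset.range n, W i ω) / n) atTop (nhds p) := by
      have hident : ∀ i, ProbabilityTheory.IdentDistrib (W i) (W 0) μ μ := by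
        intro i
        have hYid : ProbabilityTheory.IdentDistrib (Y i) (Y 0) μ μ :=
          ⟨(hYmeas i).aemeasurable, (hYmeas 0).aemeasurable, by rw [hYident i, hYident 0]⟩
        exact hYid.comp hIm
      have hpair : Pairwise (Function.onFun (ProbabilityTheory.IndepFun · · μ) W) := fun i j hij =>
        hWindep.indepFun hij
      have hint : Integrable (W 0) μ :=
        integrable_of_abs_le (hW 0).aestronglyMeasurable 1
          (fun ω => abs_le.2 ⟨by linarith [(hWb 0 ω).1], (hWb 0 ω).2⟩)
      have hsl := ProbabilityTheory.strong_law_ae_real W hint hpair hident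
      rwa [hmean 0] at hsl
    have hLIL := lil_upper μ W hW hWb hWindep p hmean
    rcases eq_or_lt_of_le (hnull A) with heq | hlt
    · -- binding case
      filter_upwards [hLIL] with ω hω
      filter_upwards [hω, hdet, eventually_ge_atTop 1] with n h1 h2 h3
      have hn0 : (0:ℝ) < (n:ℝ) := by exact_mod_cast h3
      refine iff_of_true ?_ heq
      rw [ge_iff_le, ← heq, le_div_iff₀ hn0]
      have := le_trans h1 h2
      linarith
    · -- slack case
      filter_upwards [hSLLN] with ω hω
      have hε : 0 < (m A - p)/2 := by linarith
      have h1 := hω.eventually_lt_const (show p < p + (m A - p)/2 by linarith)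
      have h2 := hto0.eventually_lt_const hε
      filter_upwards [h1, h2] with n hn1 hn2
      refine iff_of_false ?_ (ne_of_lt hlt)
      rw [ge_iff_le, not_le]
      calc (∑ i ∈ Finset.range n, W i ω) / n < p + (m A - p)/2 := hn1
        _ = m A - (m A - p)/2 := by ring
        _ < m A - h n := by linarith
  have hall : ∀ᵐ ω ∂μ, ∀ A : Set X, ∀ᶠ n : ℕ in atTop,
      ((∑ i ∈ Finset.range n, A.indicator (fun _ => (1:ℝ)) (Y i ω)) / n ≥ m A - h n ↔
        (P A).toReal = m A) := ae_all_iff.2 key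
  filter_upwards [hall] with ω hω
  filter_upwards [eventually_all.2 hω] with n hn
  ext A
  simp only [Set.mem_setOf_eq]
  exact hn A
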